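/- Assume the Setup, and let M' = M∖{a,b}. Let u be an (N,B)-strong element of M' such that u ∉ {x,y}, and let S be an unstable series pair of M'∖u. Then S ∩ B ⊆ {x,y}. -/

import Mathlib

open Set Matroid

namespace ExcludedMinorsFragile

variable {α : Type*}

/-! ### Basic matroid operations not present in this Mathlib version -/

/-- Deletion of a set of elements from a matroid. -/
noncomputable def del (M : Matroid α) (D : Set α) : Matroid α := M ↾ (M.E \ D)

/-- Contraction of a set of elements in a matroid. -/
noncomputable def con (M : Matroid α) (C : Set α) : Matroid α := (M✶ ↾ (M.E \ C))✶

/-- The extended rank of a set in a matroid. -/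
noncomputable def eRk (M : Matroid α) (X : Set α) : ℕ∞ :=
  ⨆ I ∈ {I : Set α | M.Indep I ∧ I ⊆ X}, I.encard

/-- `N` is (literally) a minor of `M`. -/
def IsMinorOf (N M : Matroid α) : Prop :=
  ∃ C D : Set α, Disjoint C D ∧ C ⊆ M.E ∧ D ⊆ M.E ∧ N = del (con M C) D

/-- Isomorphism of matroids (on the same type). -/
def MatIso (M N : Matroid α) : Prop :=
  ∃ f : α → α, Set.BijOn f M.E N.E ∧ ∀ I, I ⊆ M.E → (M.Indep I ↔ N.Indep (f '' I))

/-- `M` has a minor isomorphic to `N`. -/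
def HasNMinor (M N : Matroid α) : Prop :=
  ∃ M' : Matroid α, IsMinorOf M' M ∧ MatIso M' N

/-! ### Connectivity -/

/-- A (Tutte) `k`-separation of `M`. -/
def KSep (M : Matroid α) (k : ℕ) (X Y : Set α) : Prop :=
  Disjoint X Y ∧ X ∪ Y = M.E ∧ (k : ℕ∞) ≤ X.encard ∧ (k : ℕ∞) ≤ Y.encard ∧
    eRk M X + eRk M Y + 1 ≤ eRk M M.E + k

/-- A matroid is `3`-connected if it has no `k`-separation for `k < 3`. -/
def ThreeConnected (M : Matroid α) : Prop :=
  ∀ (k : ℕ) (X Y : Set α), k < 3 → ¬ KSep M k X Y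

/-- An exact 3-separation (both sides of size at least 3, connectivity exactly two). -/
def Sep3 (M : Matroid α) (X Y : Set α) : Prop :=
  Disjoint X Y ∧ X ∪ Y = M.E ∧ (3 : ℕ∞) ≤ X.encard ∧ (3 : ℕ∞) ≤ Y.encard ∧
    eRk M X + eRk M Y ≤ eRk M M.E + 2

/-! ### Circuits, triangles, triads, segments -/

/-- A circuit : a minimal dependent set. -/
def Circuit (M : Matroid α) (C : Set α) : Prop :=
  C ⊆ M.E ∧ ¬ M.Indep C ∧ ∀ x ∈ C, M.Indep (C \ {x})

/-- A triangle : a 3-element circuit. -/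
def IsTriangle (M : Matroid α) (T : Set α) : Prop :=
  Circuit M T ∧ T.encard = 3

/-- A triad : a 3-element cocircuit. -/
def IsTriad (M : Matroid α) (T : Set α) : Prop :=
  Circuit M✶ T ∧ T.encard = 3

/-- A cosegment : every 3-element subset is a triad. -/
def Cosegment (M : Matroid α) (C : Set α) : Prop :=
  C ⊆ M.E ∧ ∀ T ⊆ C, T.encard = 3 → IsTriad M T

/-! ### Parallel and series classes, simplification and cosimplification -/

/-- Two elements are parallel if they are nonloops with the same closure. -/
def Parallel (M : Matroid α) (e f : α) : Prop :=
  M.Indep {e} ∧ M.Indep {f} ∧ M.closure {e} = M.closure {f}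

/-- A parallel class of `M`. -/
def ParallelClass (M : Matroid α) (S : Set α) : Prop :=
  ∃ e, M.Indep {e} ∧ S = {f | Parallel M e f}

/-- A series class of `M` : a parallel class of the dual. -/
def SeriesClass (M : Matroid α) (S : Set α) : Prop :=
  ParallelClass M✶ S

/-- A transversal of the parallel classes of `M`; restricting to such a set gives
a simplification `si(M)` of `M`. -/
def SimpTransversal (M : Matroid α) (S : Set α) : Prop :=
  (∀ e ∈ S, M.Indep {e}) ∧ ∀ e, M.Indep {e} → ∃! f, f ∈ S ∧ Parallel M e f

/-- The cosimplification of `M` determined by the transversal `S` of the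
series classes of `M`: `co(M) = (si(M✶))✶`. -/
noncomputable def coOf (M : Matroid α) (S : Set α) : Matroid α := (M✶ ↾ S)✶

/-- `si(M)` is 3-connected. -/
def SiThreeConnected (M : Matroid α) : Prop :=
  ∃ S, SimpTransversal M S ∧ ThreeConnected (M ↾ S)

/-- `co(M)` is 3-connected. -/
def CoThreeConnected (M : Matroid α) : Prop :=
  ∃ S, SimpTransversal M✶ S ∧ ThreeConnected (coOf M S)

/-- `si(M)` is 3-connected and has an `N`-minor. -/
def SiThreeConnectedWith (N M : Matroid α) : Prop :=
  ∃ S, SimpTransversal M S ∧ ThreeConnected (M ↾ S) ∧ HasNMinor (M ↾ S) N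

/-- `co(M)` is 3-connected and has an `N`-minor. -/
def CoThreeConnectedWith (N M : Matroid α) : Prop :=
  ∃ S, SimpTransversal M✶ S ∧ ThreeConnected (coOf M S) ∧ HasNMinor (coOf M S) N

/-- `M` is 3-connected up to series pairs: `co(M)` is 3-connected and every non-trivial
series class of `M` has exactly two elements. -/
def ThreeConnUpToSeriesPairs (M : Matroid α) : Prop :=
  CoThreeConnected M ∧ ∀ S, SeriesClass M S → 2 ≤ S.encard → S.encard = 2

/-- `Q` is isomorphic to the uniform matroid `U_{1,3}`. -/
def IsoU13 (Q : Matroid α) : Prop :=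
  Q.E.encard = 3 ∧ (∀ e ∈ Q.E, Q.Indep {e}) ∧
    ∀ e ∈ Q.E, ∀ f ∈ Q.E, e ≠ f → ¬ Q.Indep {e, f}

/-! ### Wheels and whirls

By Tutte's characterisation, a 3-connected matroid with at least four elements is a wheel
or a whirl if and only if every element is in both a triangle and a triad. -/

def WheelOrWhirl (N : Matroid α) : Prop :=
  ThreeConnected N ∧ ∀ e ∈ N.E,
    (∃ T, IsTriangle N T ∧ e ∈ T) ∧ (∃ T, IsTriad N T ∧ e ∈ T)

/-! ### N-minors: deletable, contractible, flexible, fragile -/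

def NDeletable (N M : Matroid α) (e : α) : Prop := HasNMinor (del M {e}) N

def NContractible (N M : Matroid α) (e : α) : Prop := HasNMinor (con M {e}) N

def NFlexible (N M : Matroid α) (e : α) : Prop := NDeletable N M e ∧ NContractible N M e

/-- `M` is (strictly) `N`-fragile: `M` has an `N`-minor and no element is `N`-flexible. -/
def NFragile (N M : Matroid α) : Prop :=
  HasNMinor M N ∧ ∀ e ∈ M.E, ¬ NFlexible N M e

variable {α : Type*}

/-! ### Partial fields -/

/-- A partial field: a commutative ring together with a subgroup of its units containing `-1`. -/
structure PartialField where
  R : Type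
  [commRing : CommRing R]
  G : Subgroup Rˣ
  neg_one_mem : -1 ∈ G

attribute [instance] PartialField.commRing

/-- The set of elements of a partial field: the members of `G` together with `0`. -/
def PartialField.carrier (P : PartialField) : Set P.R :=
  {x | x = 0 ∨ ∃ u ∈ P.G, (u : P.R) = x}

/-- The determinant of the square submatrix of `A` with rows `Xz` and columns `Yz`,
with columns matched to rows via the bijection `e`. -/
noncomputable def subdet (P : PartialField) (A : α → α → P.R) (Xz Yz : Finset α)
    (e : {x // x ∈ Xz} ≃ {y // y ∈ Yz}) : P.R :=
  letI : DecidableEq {x // x ∈ Xz} := Classical.decEq _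
  Matrix.det (Matrix.of fun i j : {x // x ∈ Xz} => A (i : α) ((e j : α)))

/-- `A` is a `P`-matrix with row set `X` and column set `Y`: every square submatrix has
determinant in `P`. -/
def IsPMatrix (P : PartialField) (X Y : Set α) (A : α → α → P.R) : Prop :=
  ∀ (Xz Yz : Finset α), ↑Xz ⊆ X → ↑Yz ⊆ Y →
    ∀ e : {x // x ∈ Xz} ≃ {y // y ∈ Yz}, subdet P A Xz Yz e ∈ P.carrier

/-- The square submatrix `A[Z]` (rows `X ∩ Z`, columns `Y ∩ Z`) has nonzero determinant. -/
def NonzeroSubdet (P : PartialField) (A : α → α → P.R) (X Y Z : Set α) : Prop :=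
  ∃ (Xz Yz : Finset α) (e : {x // x ∈ Xz} ≃ {y // y ∈ Yz}),
    ↑Xz = X ∩ Z ∧ ↑Yz = Y ∩ Z ∧ subdet P A Xz Yz e ≠ 0

/-- `M = M[I|A]`, where `A` has row set `X` and column set `Y`:  the ground set of `M` is
`X ∪ Y` and the bases of `M` are `X` together with the sets `X △ Z` for `Z ⊆ X ∪ Y` with
`|X ∩ Z| = |Y ∩ Z|` and `det A[Z] ≠ 0`. -/
def Represents (P : PartialField) (X Y : Set α) (A : α → α → P.R) (M : Matroid α) : Prop :=
  Disjoint X Y ∧ M.E = X ∪ Y ∧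
    ∀ Bs : Set α, M.IsBase Bs ↔
      (Bs = X ∨ ∃ Z ⊆ X ∪ Y, Bs = symmDiff X Z ∧ (X ∩ Z).encard = (Y ∩ Z).encard ∧
        NonzeroSubdet P A X Y Z)

/-- `M` is `P`-representable. -/
def PRep (P : PartialField) (M : Matroid α) : Prop :=
  ∃ (X Y : Set α) (A : α → α → P.R), IsPMatrix P X Y A ∧ Represents P X Y A M

/-- `M` is an excluded minor for the class of `P`-representable matroids. -/
def ExcludedMinor (P : PartialField) (M : Matroid α) : Prop :=
  ¬ PRep P M ∧ ∀ C D : Set α, Disjoint C D → C ⊆ M.E → D ⊆ M.E → (C ∪ D).Nonempty →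
    PRep P (del (con M C) D)

/-- Two matrices with row set `X` and column set `Y` are scaling equivalent. -/
def ScalingEquiv (P : PartialField) (X Y : Set α) (A1 A2 : α → α → P.R) : Prop :=
  ∃ r c : α → P.Rˣ, (∀ i ∈ X, r i ∈ P.G) ∧ (∀ j ∈ Y, c j ∈ P.G) ∧
    ∀ i ∈ X, ∀ j ∈ Y, A2 i j = (r i : P.R) * A1 i j * (c j : P.R)

/-- `N` is a `P`-stabilizer for the class of `P`-representable matroids. -/
def IsStabilizer (P : PartialField) (N : Matroid α) : Prop :=
  ThreeConnected N ∧ PRep P N ∧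
  ∀ (M N' : Matroid α), ThreeConnected M → PRep P M → MatIso N' N → IsMinorOf N' M →
    ∀ (X Y X' Y' : Set α) (A1 A2 : α → α → P.R),
      N'.E = X' ∪ Y' → N'.IsBase X' → X' ⊆ X → Y' ⊆ Y →
      IsPMatrix P X Y A1 → IsPMatrix P X Y A2 →
      Represents P X Y A1 M → Represents P X Y A2 M →
      Represents P X' Y' A1 N' → Represents P X' Y' A2 N' →
      ScalingEquiv P X' Y' A1 A2 →
      ScalingEquiv P X Y A1 A2

/-- `N` is a strong `P`-stabilizer: a `P`-stabilizer such that every `P`-representation of `N`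
extends to a `P`-representation of every 3-connected `P`-representable matroid with an
`N`-minor. -/
def IsStrongStabilizer (P : PartialField) (N : Matroid α) : Prop :=
  IsStabilizer P N ∧
  ∀ (M N' : Matroid α), ThreeConnected M → PRep P M → MatIso N' N → IsMinorOf N' M →
    ∀ (X' Y' : Set α) (A' : α → α → P.R),
      N'.E = X' ∪ Y' → N'.IsBase X' → IsPMatrix P X' Y' A' → Represents P X' Y' A' N' →
      ∃ (X Y : Set α) (A : α → α → P.R), X' ⊆ X ∧ Y' ⊆ Y ∧ IsPMatrix P X Y A ∧
        Represents P X Y A M ∧ ∀ i ∈ X', ∀ j ∈ Y', A i j = A' i j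

/-- `Z` incriminates the pair `(M, A)`, where `A` is a `B × (E(M) − B)` matrix. -/
def Incriminates (P : PartialField) (M : Matroid α) (B : Set α) (A : α → α → P.R)
    (Z : Set α) : Prop :=
  Z ⊆ M.E ∧ ∃ (Xz Yz : Finset α) (e : {x // x ∈ Xz} ≃ {y // y ∈ Yz}),
    ↑Xz = B ∩ Z ∧ ↑Yz = (M.E \ B) ∩ Z ∧
    (subdet P A Xz Yz e ∉ P.carrier ∨
     (subdet P A Xz Yz e = 0 ∧ M.IsBase (symmDiff B Z)) ∨
     (subdet P A Xz Yz e ≠ 0 ∧ M.Dep (symmDiff B Z)))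

/-! ### Companion matrices and the Setup -/

/-- `A` is a companion matrix for the excluded minor `M` with deletion pair `{a,b}`,
relative to the basis `B` of `M ∖ {a,b}` and stabilizer `N`. -/
structure IsCompanion (P : PartialField) (M N : Matroid α) (a b : α) (B : Set α)
    (A : α → α → P.R) : Prop where
  pMata : IsPMatrix P B ((M.E \ B) \ {a}) A
  pMatb : IsPMatrix P B ((M.E \ B) \ {b}) A
  repa : Represents P B ((M.E \ B) \ {a}) A (del M {a})
  repb : Represents P B ((M.E \ B) \ {b}) A (del M {b})
  repN : ∃ (N' : Matroid α) (X' Y' : Set α), MatIso N' N ∧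
      IsMinorOf N' (del M {a, b}) ∧ N'.E = X' ∪ Y' ∧ N'.IsBase X' ∧
      X' ⊆ B ∧ Y' ⊆ (M.E \ B) \ {a, b} ∧ IsPMatrix P X' Y' A ∧ Represents P X' Y' A N'

/-- The Setup: `N` is a 3-connected strong `P`-stabilizer with at least 4 elements that is
neither a wheel nor a whirl; `M` is an excluded minor for `P`-representability; `{a,b}` is a
deletion pair with `M ∖ {a,b}` 3-connected with an `N`-minor; `B` is a basis of `M ∖ {a,b}`;
`A` is a companion matrix for `M`; and `{a,b,x,y}` incriminates `(M,A)` with `x,y ∈ B`. -/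
structure Setup (P : PartialField) (M N : Matroid α) (a b x y : α) (B : Set α)
    (A : α → α → P.R) : Prop where
  mFin : M.Finite
  nFin : N.Finite
  hN3 : ThreeConnected N
  hNcard : 4 ≤ N.E.encard
  hStrong : IsStrongStabilizer P N
  hNW : ¬ WheelOrWhirl N
  hab : a ≠ b
  haE : a ∈ M.E
  hbE : b ∈ M.E
  hExcl : ExcludedMinor P M
  h3conn : ThreeConnected (del M {a, b})
  hNminor : HasNMinor (del M {a, b}) N
  hB : (del M {a, b}).IsBase B
  hComp : IsCompanion P M N a b B A
  hx : x ∈ B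
  hy : y ∈ B
  hxy : x ≠ y
  hInc : Incriminates P M B A {a, b, x, y}

/-! ### Robust and strong elements -/

/-- `e` is an `(N,B)`-robust element of `M'`. -/
def Robust (N M' : Matroid α) (B : Set α) (e : α) : Prop :=
  (e ∈ B ∧ HasNMinor (con M' {e}) N) ∨ (e ∈ M'.E \ B ∧ HasNMinor (del M' {e}) N)

/-- `e` is an `(N,B)`-strong element of `M'`. -/
def Strong (N M' : Matroid α) (B : Set α) (e : α) : Prop :=
  (e ∈ B ∧ SiThreeConnectedWith N (con M' {e})) ∨
  (e ∈ M'.E \ B ∧ CoThreeConnectedWith N (del M' {e}))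

/-- An admissible tuple for the excluded minor `M` with deletion pair `{a,b}`:
a basis `B` of `M ∖ {a,b}`, a companion matrix `A`, and elements `x, y ∈ B`
such that `{a,b,x,y}` incriminates `(M,A)`. -/
def Admissible (P : PartialField) (M N : Matroid α) (a b : α) (B : Set α)
    (A : α → α → P.R) (x y : α) : Prop :=
  (del M {a, b}).IsBase B ∧ IsCompanion P M N a b B A ∧ x ∈ B ∧ y ∈ B ∧ x ≠ y ∧
    Incriminates P M B A {a, b, x, y}

/-- `B` (with companion matrix `A` and incriminating pair `x,y`) is a robust basis for `M`:
no admissible tuple has more robust elements outside its incriminating pair. -/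
def RobustBasis (P : PartialField) (M N : Matroid α) (a b : α) (B : Set α)
    (A : α → α → P.R) (x y : α) : Prop :=
  Admissible P M N a b B A x y ∧
  ∀ (B' : Set α) (A' : α → α → P.R) (x' y' : α), Admissible P M N a b B' A' x' y' →
    {e ∈ (del M {a, b}).E | Robust N (del M {a, b}) B' e ∧ e ∉ ({x', y'} : Set α)}.encard ≤
    {e ∈ (del M {a, b}).E | Robust N (del M {a, b}) B e ∧ e ∉ ({x, y} : Set α)}.encard

/-! ### Confining sets -/

/-- A confining set of `M'` (relative to the basis `B` and the incriminating pair `x,y`). -/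
def ConfiningSet (N M' : Matroid α) (B : Set α) (x y : α) (G : Set α) : Prop :=
  G ⊆ M'.E ∧ G ∩ B = {x, y} ∧
  ∃ T T' : Set α, IsTriad M' T ∧ IsTriad M' T' ∧ G = T ∪ T' ∧
    ((T ∩ T').encard = 1 ∨ (T ∩ T').encard = 2) ∧
    G ⊆ M'✶.closure (G \ B) ∧
    ((T ∩ T').encard = 1 → ∃ u ∈ G \ B, Strong N M' B u)

/-! ### Binary matroids, 2-sums and `N`-stability -/

/-- The partial field `GF(2)`. -/
def GF2 : PartialField := { R := ZMod 2, G := ⊤, neg_one_mem := Subgroup.mem_top _ }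

/-- A binary matroid : one representable over `GF(2)`. -/
def Binary (Q : Matroid α) : Prop := PRep GF2 Q

/-- `M` is the 2-sum of `MX` and `MY` along the basepoint `p`, characterised by circuits. -/
def IsTwoSumOf (M MX MY : Matroid α) (p : α) : Prop :=
  p ∉ M.E ∧ MX.E ∩ MY.E = {p} ∧ M.E = (MX.E ∪ MY.E) \ {p} ∧
  ∀ C : Set α, Circuit M C ↔
    ((Circuit MX C ∧ p ∉ C) ∨ (Circuit MY C ∧ p ∉ C) ∨
      ∃ C1 C2, Circuit MX C1 ∧ Circuit MY C2 ∧ p ∈ C1 ∧ p ∈ C2 ∧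
        C = (C1 \ {p}) ∪ (C2 \ {p}))

/-- `Q` is `N`-stable: `Q` has an `N`-minor and, for every 2-separation `(X,Y)` of `Q` with
`|X ∩ E(N)| ≤ 1` (for an embedded copy of `N`), the matroid corresponding to `X` in the
1- or 2-sum decomposition of `Q` induced by `(X,Y)` is binary. -/
def NStable (N Q : Matroid α) : Prop :=
  HasNMinor Q N ∧
  ∀ N' : Matroid α, IsMinorOf N' Q → MatIso N' N →
    ∀ X Y : Set α, KSep Q 2 X Y → (X ∩ N'.E).encard ≤ 1 →
      ((eRk Q X + eRk Q Y ≤ eRk Q Q.E → Binary (Q ↾ X)) ∧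
        ∀ (MX MY : Matroid α) (p : α), IsTwoSumOf Q MX MY p → MX.E = insert p X →
          Binary MX)

/-- An unstable series pair of `M' ∖ u` (where `M' = M ∖ {a,b}`): a 2-element series class
`S` of `M' ∖ u` with some element of `{a,b}` in the closure of `S` in `M`. -/
def UnstableSeriesPair (M : Matroid α) (a b u : α) (S : Set α) : Prop :=
  SeriesClass (del M {a, b, u}) S ∧ S.encard = 2 ∧
    (a ∈ M.closure S ∨ b ∈ M.closure S)

/-! ### Vertical 3-separations -/

/-- A vertical 3-separation `(X, z, Y)` of `M`. -/
def VertSep3 (M : Matroid α) (X : Set α) (z : α) (Y : Set α) : Prop :=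
  Disjoint X Y ∧ z ∉ X ∧ z ∉ Y ∧ insert z (X ∪ Y) = M.E ∧
    Sep3 M (insert z X) Y ∧ Sep3 M X (insert z Y) ∧
    3 ≤ eRk M X ∧ 3 ≤ eRk M Y ∧ z ∈ M.closure X ∧ z ∈ M.closure Y

/-- `Y` is `z`-closed: `Y = cl*(Y)` and `Y = cl(Y) − {z}`. -/
def ZClosed (M : Matroid α) (z : α) (Y : Set α) : Prop :=
  M✶.closure Y = Y ∧ M.closure Y \ {z} = Y

/-! ### Fans -/

/-- `(f1,f2,f3,f4)` is a type-II fan of `M` relative to the basis `B` : `{f1,f2,f3}` is a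
triangle, `{f2,f3,f4}` is a triad, and `B ∩ {f1,f2,f3,f4} = {f1,f3,f4}`. -/
def TypeIIFan (M : Matroid α) (B : Set α) (f1 f2 f3 f4 : α) : Prop :=
  f1 ≠ f2 ∧ f1 ≠ f3 ∧ f1 ≠ f4 ∧ f2 ≠ f3 ∧ f2 ≠ f4 ∧ f3 ≠ f4 ∧
    IsTriangle M {f1, f2, f3} ∧ IsTriad M {f2, f3, f4} ∧
    B ∩ {f1, f2, f3, f4} = {f1, f3, f4}

/-- The 4-element fan `(f1,f2,f3,f4)` (with `{f1,f2,f3}` a triangle and `{f2,f3,f4}` a triad)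
is maximal : it cannot be extended to a 5-element fan. -/
def MaximalFan4 (M : Matroid α) (f1 f2 f3 f4 : α) : Prop :=
  ¬ ∃ g, g ∉ ({f1, f2, f3, f4} : Set α) ∧
    (IsTriad M {g, f1, f2} ∨ IsTriangle M {f3, f4, g})

/-! ### Paths of 3-separations -/

/-- The union of a list of sets. -/
def listUnion (l : List (Set α)) : Set α := l.foldr (· ∪ ·) ∅

/-- A path of 3-separations of `M`: a partition `(P1, …, Pn)` of `E(M)` such that each
prefix is exactly 3-separating. -/
def PathOf3Seps (M : Matroid α) (l : List (Set α)) : Prop :=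
  l.Pairwise Disjoint ∧ listUnion l = M.E ∧
    ∀ i : ℕ, 1 ≤ i → i < l.length →
      Sep3 M (listUnion (l.take i)) (listUnion (l.drop i))

/-! ### Splitter sequences -/

/-- A splitter sequence for `R` in `Q`: disjoint sets `C`, `D` with `Q / C ∖ D ≅ R`, and an
ordering `l` of `C ∪ D` along which every intermediate minor is 3-connected. -/
def SplitterSeq (Q R : Matroid α) (C D : Set α) (l : List α) : Prop :=
  Disjoint C D ∧ C ⊆ Q.E ∧ D ⊆ Q.E ∧ l.Nodup ∧ {x | x ∈ l} = C ∪ D ∧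
    MatIso (del (con Q C) D) R ∧
    ∀ i ≤ l.length,
      ThreeConnected (del (con Q (C ∩ {x | x ∈ l.take i})) (D ∩ {x | x ∈ l.take i}))

/-! ### Δ-Y and Y-Δ exchanges -/

/-- A flat of a matroid. -/
def IsFlat (M : Matroid α) (F : Set α) : Prop := F ⊆ M.E ∧ M.closure F = F

/-- `Q` is isomorphic to the cycle matroid `M(K4)` with `T` a (specified) triangle:
there is a labelling of the six edges of `K4` by the elements of `Q` under which the
circuits of `Q` are exactly the edge sets of the cycles of `K4`. -/
def IsMK4 (Q : Matroid α) (T : Set α) : Prop :=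
  ∃ g : Fin 4 → Fin 4 → α,
    (∀ u v, g u v = g v u) ∧
    (∀ u v u' v', u ≠ v → u' ≠ v' → g u v = g u' v' → ((u = u' ∧ v = v') ∨ (u = v' ∧ v = u'))) ∧
    Q.E = {x | ∃ u v, u ≠ v ∧ x = g u v} ∧
    T = {g 0 1, g 0 2, g 1 2} ∧
    ∀ C : Set α, Circuit Q C ↔
      ((∃ u v w, u ≠ v ∧ u ≠ w ∧ v ≠ w ∧ C = {g u v, g v w, g u w}) ∨
       (∃ u v w z, u ≠ v ∧ u ≠ w ∧ u ≠ z ∧ v ≠ w ∧ v ≠ z ∧ w ≠ z ∧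
          C = {g u v, g v w, g w z, g z u}))

/-- `Pc` is the generalized parallel connection of `M1` and `M2` across the common
restriction `T`: its flats are the sets whose traces on `E(M1)` and `E(M2)` are flats. -/
def IsGenParallelConn (M1 M2 Pc : Matroid α) (T : Set α) : Prop :=
  M1.E ∩ M2.E = T ∧ Pc.E = M1.E ∪ M2.E ∧
    ∀ F : Set α, IsFlat Pc F ↔ (IsFlat M1 (F ∩ M1.E) ∧ IsFlat M2 (F ∩ M2.E))

/-- `DM` is obtained from `M` by a Δ-Y exchange on the triangle `T`:
`DM = P_T(M(K4), M) ∖ T`. -/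
def IsDeltaY (T : Set α) (M DM : Matroid α) : Prop :=
  IsTriangle M T ∧ ∃ K Pc : Matroid α, IsMK4 K T ∧ K.E ∩ M.E = T ∧
    IsGenParallelConn K M Pc T ∧ DM = del Pc T

/-- `NQ` is obtained from `Q` by a Y-Δ exchange on the triad `T`: `∇_T(Q) = (Δ_T(Q✶))✶`. -/
def IsNablaY (T : Set α) (Q NQ : Matroid α) : Prop :=
  IsDeltaY T Q✶ NQ✶

/-! ### Auxiliary lemmas for statement 9 -/

section Statement9Aux

variable {P : PartialField}

private lemma pf_zero_mem (P : PartialField) : (0 : P.R) ∈ P.carrier := Or.inl rfl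

private lemma pf_mul_mem {x y : P.R} (hx : x ∈ P.carrier) (hy : y ∈ P.carrier) :
    x * y ∈ P.carrier := by
  rcases hx with rfl | ⟨u, hu, rfl⟩
  · exact Or.inl (zero_mul _)
  rcases hy with rfl | ⟨v, hv, rfl⟩
  · exact Or.inl (mul_zero _)
  · exact Or.inr ⟨u * v, mul_mem hu hv, rfl⟩

private lemma pf_neg_mem {x : P.R} (hx : x ∈ P.carrier) : -x ∈ P.carrier := by
  rcases hx with rfl | ⟨u, hu, rfl⟩
  · exact Or.inl neg_zero
  · exact Or.inr ⟨-u, by simpa using mul_mem P.neg_one_mem hu, by simp⟩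

private lemma pf_unit {x : P.R} (hx : x ∈ P.carrier) (h0 : x ≠ 0) :
    ∃ u : P.Rˣ, u ∈ P.G ∧ (u : P.R) = x := by
  rcases hx with rfl | ⟨u, hu, rfl⟩
  · exact absurd rfl h0
  · exact ⟨u, hu, rfl⟩

private lemma pf_inv_mem {x : P.R} (hx : x ∈ P.carrier) (h0 : x ≠ 0) :
    ∃ v : P.Rˣ, (v : P.R) * x = 1 ∧ (v : P.R) ∈ P.carrier := by
  obtain ⟨u, hu, rfl⟩ := pf_unit hx h0
  exact ⟨u⁻¹, u.inv_mul, Or.inr ⟨u⁻¹, inv_mem hu, rfl⟩⟩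

private lemma pf_cancel {x y : P.R} (hx : x ∈ P.carrier) (h0 : x ≠ 0) (h : x * y = 0) :
    y = 0 := by
  obtain ⟨v, hv, _⟩ := pf_inv_mem hx h0
  calc y = (v : P.R) * x * y := by rw [hv, one_mul]
  _ = (v : P.R) * (x * y) := by ring
  _ = 0 := by rw [h, mul_zero]

end Statement9Aux
section Statement9Det

variable {α : Type*} {P : PartialField}

private def oneEquiv {Xz : Finset α} {r : α} (hX : (Xz : Set α) = {r}) :
    Fin 1 ≃ {x // x ∈ Xz} where
  toFun := fun _ => ⟨r, by rw [← Finset.mem_coe, hX]; exact Set.mem_singleton r⟩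
  invFun := fun _ => 0
  left_inv := fun i => Subsingleton.elim _ _
  right_inv := fun p => by
    have hp : (p : α) = r := by
      have := p.2; rwa [← Finset.mem_coe, hX, Set.mem_singleton_iff] at this
    exact Subtype.ext hp.symm

private lemma subdet_one {A : α → α → P.R} {Xz Yz : Finset α} {r c : α}
    (hX : (Xz : Set α) = {r}) (hY : (Yz : Set α) = {c})
    (e : {x // x ∈ Xz} ≃ {y // y ∈ Yz}) :
    subdet P A Xz Yz e = A r c := by
  have hval : ∀ j : {y // y ∈ Yz}, (j : α) = c := fun j => by
    have := j.2; rwa [← Finset.mem_coe, hY, Set.mem_singleton_iff] at this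
  have hrow : ∀ i : {x // x ∈ Xz}, (i : α) = r := fun i => by
    have := i.2; rwa [← Finset.mem_coe, hX, Set.mem_singleton_iff] at this
  unfold subdet
  letI : DecidableEq {x // x ∈ Xz} := Classical.decEq _
  rw [← Matrix.det_submatrix_equiv_self (oneEquiv hX), Matrix.det_fin_one]
  simp only [Matrix.submatrix_apply, Matrix.of_apply]
  rw [hrow, hval]

private def pairFun {Xz : Finset α} {r s : α} (hX : (Xz : Set α) = {r, s}) :
    Fin 2 → {x // x ∈ Xz} :=
  ![⟨r, by rw [← Finset.mem_coe, hX]; exact Set.mem_insert _ _⟩,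
    ⟨s, by rw [← Finset.mem_coe, hX]; exact Set.mem_insert_of_mem _ rfl⟩]

private noncomputable def pairEquiv {Xz : Finset α} {r s : α} (hrs : r ≠ s) (hX : (Xz : Set α) = {r, s}) :
    Fin 2 ≃ {x // x ∈ Xz} :=
  Equiv.ofBijective (pairFun hX) (by
    constructor
    · intro i j hij
      fin_cases i <;> fin_cases j <;> simp_all [pairFun, hrs, hrs.symm]
    · intro p
      have hp : (p : α) = r ∨ (p : α) = s := by
        have := p.2
        rwa [← Finset.mem_coe, hX, Set.mem_insert_iff, Set.mem_singleton_iff] at this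
      rcases hp with h | h
      · exact ⟨0, Subtype.ext (by simp [pairFun, h])⟩
      · exact ⟨1, Subtype.ext (by simp [pairFun, h])⟩)

private lemma pairEquiv_zero {Xz : Finset α} {r s : α} (hrs : r ≠ s)
    (hX : (Xz : Set α) = {r, s}) : ((pairEquiv hrs hX 0 : {x // x ∈ Xz}) : α) = r := rfl

private lemma pairEquiv_one {Xz : Finset α} {r s : α} (hrs : r ≠ s)
    (hX : (Xz : Set α) = {r, s}) : ((pairEquiv hrs hX 1 : {x // x ∈ Xz}) : α) = s := rfl

private lemma subdet_pair {A : α → α → P.R} {Xz Yz : Finset α} {r s c d : α}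
    (hrs : r ≠ s) (hcd : c ≠ d)
    (hX : (Xz : Set α) = {r, s}) (hY : (Yz : Set α) = {c, d})
    (e : {x // x ∈ Xz} ≃ {y // y ∈ Yz}) :
    subdet P A Xz Yz e = A r c * A s d - A r d * A s c ∨
    subdet P A Xz Yz e = A r d * A s c - A r c * A s d := by
  set φ := pairEquiv hrs hX with hφ
  have hφ0 : ((φ 0 : {x // x ∈ Xz}) : α) = r := pairEquiv_zero hrs hX
  have hφ1 : ((φ 1 : {x // x ∈ Xz}) : α) = s := pairEquiv_one hrs hX
  have hmem : ∀ j : {y // y ∈ Yz}, (j : α) = c ∨ (j : α) = d := fun j => by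
    have := j.2; rwa [← Finset.mem_coe, hY, Set.mem_insert_iff, Set.mem_singleton_iff] at this
  have hne : ((e (φ 0) : α)) ≠ ((e (φ 1) : α)) := by
    intro h
    have h2 : φ 0 = φ 1 := e.injective (Subtype.ext h)
    have h3 : (0 : Fin 2) = 1 := φ.injective h2
    simp at h3
  have base : subdet P A Xz Yz e =
      A r (e (φ 0) : α) * A s (e (φ 1) : α) - A r (e (φ 1) : α) * A s (e (φ 0) : α) := by
    unfold subdet
    letI : DecidableEq {x // x ∈ Xz} := Classical.decEq _
    rw [← Matrix.det_submatrix_equiv_self φ, Matrix.det_fin_two]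
    simp only [Matrix.submatrix_apply, Matrix.of_apply]
    rw [hφ0, hφ1]
  rcases hmem (e (φ 0)) with h0 | h0
  · left
    have h1 : ((e (φ 1) : α)) = d := by
      rcases hmem (e (φ 1)) with h | h
      · exact absurd (h0.trans h.symm) hne
      · exact h
    rw [base, h0, h1]
  · right
    have h1 : ((e (φ 1) : α)) = c := by
      rcases hmem (e (φ 1)) with h | h
      · exact h
      · exact absurd (h0.trans h.symm) hne
    rw [base, h0, h1]

end Statement9Det
section Statement9Rep

variable {α : Type*} {P : PartialField}


private lemma coe_pairF [DecidableEq α] (r s : α) :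
    ((({r, s} : Finset α)) : Set α) = ({r, s} : Set α) := by simp

private lemma rep_base_self {X Y : Set α} {A : α → α → P.R} {Q : Matroid α}
    (rep : Represents P X Y A Q) : Q.IsBase X :=
  (rep.2.2 X).mpr (Or.inl rfl)

private lemma rep_base_iff {X Y : Set α} {A : α → α → P.R} {Q : Matroid α}
    (rep : Represents P X Y A Q) {Z : Set α}
    (hZ : Z ⊆ X ∪ Y) (hne : Z.Nonempty) (hcard : (X ∩ Z).encard = (Y ∩ Z).encard) :
    Q.IsBase (symmDiff X Z) ↔ NonzeroSubdet P A X Y Z := by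
  rw [rep.2.2]
  constructor
  · rintro (h | ⟨Z', hZ', hEq, _, hnz⟩)
    · exfalso
      have hZe : Z = (∅ : Set α) := by
        apply symmDiff_right_injective X
        show symmDiff X Z = symmDiff X ∅
        rw [h]
        exact (symmDiff_bot X).symm
      rw [hZe] at hne
      exact Set.not_nonempty_empty hne
    · obtain rfl : Z' = Z := symmDiff_right_injective X (by exact hEq.symm)
      exact hnz
  · intro h
    exact Or.inr ⟨Z, hZ, rfl, hcard, h⟩

private lemma nonzero_single_iff {X Y : Set α} {A : α → α → P.R} {r c : α}
    (hrX : r ∈ X) (hcY : c ∈ Y) (hXY : Disjoint X Y) :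
    NonzeroSubdet P A X Y {r, c} ↔ A r c ≠ 0 := by
  have hcX : c ∉ X := fun h => Set.disjoint_left.mp hXY h hcY
  have hrY : r ∉ Y := fun h => Set.disjoint_left.mp hXY hrX h
  have hXZ : X ∩ {r, c} = {r} := by
    ext t
    simp only [Set.mem_inter_iff, Set.mem_insert_iff, Set.mem_singleton_iff]
    constructor
    · rintro ⟨htX, rfl | rfl⟩
      · rfl
      · exact absurd htX hcX
    · rintro rfl; exact ⟨hrX, Or.inl rfl⟩
  have hYZ : Y ∩ {r, c} = {c} := by
    ext t
    simp only [Set.mem_inter_iff, Set.mem_insert_iff, Set.mem_singleton_iff]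
    constructor
    · rintro ⟨htY, rfl | rfl⟩
      · exact absurd htY hrY
      · rfl
    · rintro rfl; exact ⟨hcY, Or.inr rfl⟩
  constructor
  · rintro ⟨Xz, Yz, e, hXz, hYz, hne⟩
    rw [hXZ] at hXz; rw [hYZ] at hYz
    rwa [subdet_one hXz hYz e] at hne
  · intro h
    refine ⟨{r}, {c}, (oneEquiv (Finset.coe_singleton r)).symm.trans
      (oneEquiv (Finset.coe_singleton c)), by simp [hXZ], by simp [hYZ], ?_⟩
    rwa [subdet_one (Finset.coe_singleton r) (Finset.coe_singleton c)]

private lemma nonzero_pair_iff {X Y : Set α} {A : α → α → P.R} {r s c d : α}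
    (hrX : r ∈ X) (hsX : s ∈ X) (hrs : r ≠ s)
    (hcY : c ∈ Y) (hdY : d ∈ Y) (hcd : c ≠ d) (hXY : Disjoint X Y) :
    NonzeroSubdet P A X Y {r, s, c, d} ↔ A r c * A s d - A r d * A s c ≠ 0 := by
  classical
  have hcX : c ∉ X := fun h => Set.disjoint_left.mp hXY h hcY
  have hdX : d ∉ X := fun h => Set.disjoint_left.mp hXY h hdY
  have hrY : r ∉ Y := fun h => Set.disjoint_left.mp hXY hrX h
  have hsY : s ∉ Y := fun h => Set.disjoint_left.mp hXY hsX h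
  have hXZ : X ∩ {r, s, c, d} = {r, s} := by
    ext t
    simp only [Set.mem_inter_iff, Set.mem_insert_iff, Set.mem_singleton_iff]
    constructor
    · rintro ⟨htX, rfl | rfl | rfl | rfl⟩
      · exact Or.inl rfl
      · exact Or.inr rfl
      · exact absurd htX hcX
      · exact absurd htX hdX
    · rintro (rfl | rfl)
      · exact ⟨hrX, Or.inl rfl⟩
      · exact ⟨hsX, Or.inr (Or.inl rfl)⟩
  have hYZ : Y ∩ {r, s, c, d} = {c, d} := by
    ext t
    simp only [Set.mem_inter_iff, Set.mem_insert_iff, Set.mem_singleton_iff]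
    constructor
    · rintro ⟨htY, rfl | rfl | rfl | rfl⟩
      · exact absurd htY hrY
      · exact absurd htY hsY
      · exact Or.inl rfl
      · exact Or.inr rfl
    · rintro (rfl | rfl)
      · exact ⟨hcY, Or.inr (Or.inr (Or.inl rfl))⟩
      · exact ⟨hdY, Or.inr (Or.inr (Or.inr rfl))⟩
  constructor
  · rintro ⟨Xz, Yz, e, hXz, hYz, hne⟩
    rw [hXZ] at hXz; rw [hYZ] at hYz
    rcases subdet_pair hrs hcd hXz hYz e with h | h
    · rwa [h] at hne
    · rw [h] at hne
      intro h0
      apply hne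
      rw [show A r d * A s c - A r c * A s d = -(A r c * A s d - A r d * A s c) from by ring,
        h0, neg_zero]
  · intro h
    refine ⟨({r, s} : Finset α), ({c, d} : Finset α),
      (pairEquiv hrs (coe_pairF r s)).symm.trans (pairEquiv hcd (coe_pairF c d)),
      by simp [hXZ], by simp [hYZ], ?_⟩
    rcases subdet_pair (A := A) hrs hcd (coe_pairF r s) (coe_pairF c d)
        ((pairEquiv hrs (coe_pairF r s)).symm.trans (pairEquiv hcd (coe_pairF c d))) with hh | hh
    · rw [hh]; exact h
    · rw [hh]
      intro h0
      apply h
      rw [show A r c * A s d - A r d * A s c = -(A r d * A s c - A r c * A s d) from by ring,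
        h0, neg_zero]

private lemma entry_carrier {X Y : Set α} {A : α → α → P.R} {r c : α}
    (pm : IsPMatrix P X Y A) (hrX : r ∈ X) (hcY : c ∈ Y) : A r c ∈ P.carrier := by
  have := pm {r} {c} (by simpa using hrX) (by simpa using hcY)
    ((oneEquiv (Finset.coe_singleton r)).symm.trans (oneEquiv (Finset.coe_singleton c)))
  rwa [subdet_one (Finset.coe_singleton r) (Finset.coe_singleton c)] at this

private lemma det2_carrier {X Y : Set α} {A : α → α → P.R} {r s c d : α}
    (pm : IsPMatrix P X Y A) (hrX : r ∈ X) (hsX : s ∈ X) (hrs : r ≠ s)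
    (hcY : c ∈ Y) (hdY : d ∈ Y) (hcd : c ≠ d) :
    A r c * A s d - A r d * A s c ∈ P.carrier := by
  classical
  have := pm ({r, s} : Finset α) ({c, d} : Finset α)
    (by simp [Set.insert_subset_iff, hrX, hsX])
    (by simp [Set.insert_subset_iff, hcY, hdY])
    ((pairEquiv hrs (coe_pairF r s)).symm.trans (pairEquiv hcd (coe_pairF c d)))
  rcases subdet_pair (A := A) hrs hcd (coe_pairF r s) (coe_pairF c d)
      ((pairEquiv hrs (coe_pairF r s)).symm.trans (pairEquiv hcd (coe_pairF c d))) with hh | hh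
  · rwa [hh] at this
  · rw [hh] at this
    have h2 := pf_neg_mem this
    rwa [neg_sub] at h2

end Statement9Rep
section Statement9Matroid

open Matroid

variable {α : Type*} {P : PartialField}

private lemma del_indep_iff {M : Matroid α} {D I : Set α} :
    (del M D).Indep I ↔ M.Indep I ∧ I ⊆ M.E \ D := by
  rw [del]; exact Matroid.restrict_indep_iff

private lemma base_of_indep_del {M : Matroid α} {b' : α} {B J : Set α}
    (hfin : M.E.Finite) (hQB : (del M {b'}).IsBase B)
    (hJ : M.Indep J) (hJsub : J ⊆ M.E \ {b'}) (hcard : J.encard = B.encard) :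
    (del M {b'}).IsBase J := by
  have hQI : (del M {b'}).Indep J := del_indep_iff.mpr ⟨hJ, hJsub⟩
  obtain ⟨B₂, hB₂, hJB₂⟩ := hQI.exists_isBase_superset
  have hcard2 : B₂.encard = J.encard := by
    rw [hcard]; exact hB₂.encard_eq_encard_of_isBase hQB
  have hB₂fin : B₂.Finite := by
    apply hfin.subset
    have h1 := hB₂.subset_ground
    rw [del, Matroid.restrict_ground_eq] at h1
    exact h1.trans Set.diff_subset
  obtain rfl : J = B₂ := (hB₂fin.subset hJB₂).eq_of_subset_of_encard_le hJB₂ hcard2.le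
  exact hB₂

private lemma symmDiff_single {B : Set α} {r c : α} (hr : r ∈ B) (hc : c ∉ B) :
    symmDiff B {r, c} = insert c (B \ {r}) := by
  rw [Set.symmDiff_def]
  ext t
  simp only [Set.mem_union, Set.mem_diff, Set.mem_insert_iff, Set.mem_singleton_iff]
  constructor
  · rintro (⟨htB, hne⟩ | ⟨rfl | rfl, htB⟩)
    · push_neg at hne
      exact Or.inr ⟨htB, hne.1⟩
    · exact absurd hr htB
    · exact Or.inl rfl
  · rintro (rfl | ⟨htB, hne⟩)
    · exact Or.inr ⟨Or.inr rfl, hc⟩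
    · refine Or.inl ⟨htB, ?_⟩
      push_neg
      exact ⟨hne, fun h => hc (h ▸ htB)⟩

private lemma symmDiff_pair {B : Set α} {r s c d : α} (hr : r ∈ B) (hs : s ∈ B)
    (hc : c ∉ B) (hd : d ∉ B) :
    symmDiff B {r, s, c, d} = insert c (insert d (B \ {r, s})) := by
  rw [Set.symmDiff_def]
  ext t
  simp only [Set.mem_union, Set.mem_diff, Set.mem_insert_iff, Set.mem_singleton_iff]
  constructor
  · rintro (⟨htB, hne⟩ | ⟨rfl | rfl | rfl | rfl, htB⟩)
    · push_neg at hne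
      exact Or.inr (Or.inr ⟨htB, by push_neg; exact ⟨hne.1, hne.2.1⟩⟩)
    · exact absurd hr htB
    · exact absurd hs htB
    · exact Or.inl rfl
    · exact Or.inr (Or.inl rfl)
  · rintro (rfl | rfl | ⟨htB, hno⟩)
    · exact Or.inr ⟨Or.inr (Or.inr (Or.inl rfl)), hc⟩
    · exact Or.inr ⟨Or.inr (Or.inr (Or.inr rfl)), hd⟩
    · push_neg at hno
      refine Or.inl ⟨htB, ?_⟩
      push_neg
      exact ⟨hno.1, hno.2, fun h => hc (h ▸ htB), fun h => hd (h ▸ htB)⟩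

private lemma encard_double_exchange {B : Set α} {r s c d : α} (hr : r ∈ B) (hs : s ∈ B)
    (hrs : r ≠ s) (hcB : c ∉ B) (hdB : d ∉ B) (hcd : c ≠ d) :
    (insert c (insert d (B \ {r, s}))).encard = B.encard := by
  have hdr : d ≠ r := fun h => hdB (h ▸ hr)
  have h1 : (insert d (B \ {s})).encard = B.encard := Set.encard_exchange hdB hs
  have h2 : (insert d (B \ {s})) \ {r} = insert d (B \ {r, s}) := by
    rw [← Set.insert_diff_singleton_comm hdr]
    congr 1
    rw [Set.diff_diff]
    congr 1
    rw [Set.singleton_union, Set.pair_comm]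
  have hc2 : c ∉ insert d (B \ {s}) := by
    simp only [Set.mem_insert_iff, Set.mem_diff]
    push_neg
    exact ⟨hcd, fun h => absurd h hcB⟩
  have hr2 : r ∈ insert d (B \ {s}) := Set.mem_insert_of_mem _ ⟨hr, hrs⟩
  calc (insert c (insert d (B \ {r, s}))).encard
      = (insert c ((insert d (B \ {s})) \ {r})).encard := by rw [h2]
    _ = (insert d (B \ {s})).encard := Set.encard_exchange hc2 hr2
    _ = B.encard := h1

/-- The fundamental translation: a single entry of the companion matrix is nonzero iff the
corresponding exchanged set is independent in `M`. -/
private lemma entry_iff_indep {M : Matroid α} {b' : α} {B : Set α} {A : α → α → P.R} {r c : α}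
    (hfin : M.E.Finite)
    (rep : Represents P B ((M.E \ B) \ {b'}) A (del M {b'}))
    (hBiM : M.Indep B) (hBsub : B ⊆ M.E) (hb'B : b' ∉ B)
    (hr : r ∈ B) (hc : c ∈ (M.E \ B) \ {b'}) :
    A r c ≠ 0 ↔ M.Indep (insert c (B \ {r})) := by
  obtain ⟨⟨hcE, hcB⟩, hcb'⟩ := hc
  rw [Set.mem_singleton_iff] at hcb'
  have hQB : (del M {b'}).IsBase B := rep_base_self rep
  have hZsub : ({r, c} : Set α) ⊆ B ∪ (M.E \ B) \ {b'} := by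
    rintro t (rfl | rfl)
    · exact Or.inl hr
    · exact Or.inr ⟨⟨hcE, hcB⟩, hcb'⟩
  have hXZ : B ∩ {r, c} = {r} := by
    ext t
    simp only [Set.mem_inter_iff, Set.mem_insert_iff, Set.mem_singleton_iff]
    constructor
    · rintro ⟨htB, rfl | rfl⟩
      · rfl
      · exact absurd htB hcB
    · rintro rfl; exact ⟨hr, Or.inl rfl⟩
  have hYZ : (M.E \ B) \ {b'} ∩ {r, c} = {c} := by
    ext t
    simp only [Set.mem_inter_iff, Set.mem_insert_iff, Set.mem_singleton_iff, Set.mem_diff]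
    constructor
    · rintro ⟨⟨⟨htE, htB⟩, htb⟩, rfl | rfl⟩
      · exact absurd hr htB
      · rfl
    · rintro rfl; exact ⟨⟨⟨hcE, hcB⟩, hcb'⟩, Or.inr rfl⟩
  have hbase_iff : (del M {b'}).IsBase (insert c (B \ {r})) ↔ A r c ≠ 0 := by
    have hZne : ({r, c} : Set α).Nonempty := ⟨r, Or.inl rfl⟩
    rw [← symmDiff_single hr hcB,
      rep_base_iff rep hZsub hZne (by rw [hXZ, hYZ]; simp)]
    have hcY : c ∈ (M.E \ B) \ {b'} := ⟨⟨hcE, hcB⟩, hcb'⟩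
    exact nonzero_single_iff hr hcY rep.1
  constructor
  · intro h
    have := (hbase_iff.mpr h).indep
    exact (del_indep_iff.mp this).1
  · intro h
    apply hbase_iff.mp
    apply base_of_indep_del hfin hQB h
    · rw [Set.insert_subset_iff]
      refine ⟨⟨hcE, hcb'⟩, ?_⟩
      intro t ht
      exact ⟨hBsub ht.1, fun hb => hb'B (by rw [← Set.mem_singleton_iff.mp hb]; exact ht.1)⟩
    · exact Set.encard_exchange hcB hr

private lemma entry_zero_iff {M : Matroid α} {b' : α} {B : Set α} {A : α → α → P.R} {r c : α}
    (hfin : M.E.Finite)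
    (rep : Represents P B ((M.E \ B) \ {b'}) A (del M {b'}))
    (hBiM : M.Indep B) (hBsub : B ⊆ M.E) (hb'B : b' ∉ B)
    (hr : r ∈ B) (hc : c ∈ (M.E \ B) \ {b'}) :
    A r c = 0 ↔ c ∈ M.closure (B \ {r}) := by
  have h1 := entry_iff_indep hfin rep hBiM hBsub hb'B hr hc
  have hI : M.Indep (B \ {r}) := hBiM.subset Set.diff_subset
  have hcBr : c ∉ B \ {r} := fun h => hc.1.2 h.1
  rw [hI.insert_indep_iff_of_notMem hcBr] at h1
  constructor
  · intro h0
    by_contra hcl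
    exact h1.mpr ⟨hc.1.1, hcl⟩ h0
  · intro hcl
    by_contra h0
    exact (h1.mp h0).2 hcl

private lemma det2_iff_indep {M : Matroid α} {b' : α} {B : Set α} {A : α → α → P.R}
    {r s c d : α}
    (hfin : M.E.Finite)
    (rep : Represents P B ((M.E \ B) \ {b'}) A (del M {b'}))
    (hBiM : M.Indep B) (hBsub : B ⊆ M.E) (hb'B : b' ∉ B)
    (hr : r ∈ B) (hs : s ∈ B) (hrs : r ≠ s)
    (hc : c ∈ (M.E \ B) \ {b'}) (hd : d ∈ (M.E \ B) \ {b'}) (hcd : c ≠ d) :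
    A r c * A s d - A r d * A s c ≠ 0 ↔ M.Indep (insert c (insert d (B \ {r, s}))) := by
  obtain ⟨⟨hcE, hcB⟩, hcb'⟩ := hc
  obtain ⟨⟨hdE, hdB⟩, hdb'⟩ := hd
  rw [Set.mem_singleton_iff] at hcb' hdb'
  have hQB : (del M {b'}).IsBase B := rep_base_self rep
  have hZsub : ({r, s, c, d} : Set α) ⊆ B ∪ (M.E \ B) \ {b'} := by
    rintro t (rfl | rfl | rfl | rfl)
    · exact Or.inl hr
    · exact Or.inl hs
    · exact Or.inr ⟨⟨hcE, hcB⟩, hcb'⟩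
    · exact Or.inr ⟨⟨hdE, hdB⟩, hdb'⟩
  have hXZ : B ∩ {r, s, c, d} = {r, s} := by
    ext t
    simp only [Set.mem_inter_iff, Set.mem_insert_iff, Set.mem_singleton_iff]
    constructor
    · rintro ⟨htB, rfl | rfl | rfl | rfl⟩
      · exact Or.inl rfl
      · exact Or.inr rfl
      · exact absurd htB hcB
      · exact absurd htB hdB
    · rintro (rfl | rfl)
      · exact ⟨hr, Or.inl rfl⟩
      · exact ⟨hs, Or.inr (Or.inl rfl)⟩
  have hYZ : (M.E \ B) \ {b'} ∩ {r, s, c, d} = {c, d} := by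
    ext t
    simp only [Set.mem_inter_iff, Set.mem_insert_iff, Set.mem_singleton_iff, Set.mem_diff]
    constructor
    · rintro ⟨⟨⟨htE, htB⟩, htb⟩, rfl | rfl | rfl | rfl⟩
      · exact absurd hr htB
      · exact absurd hs htB
      · exact Or.inl rfl
      · exact Or.inr rfl
    · rintro (rfl | rfl)
      · exact ⟨⟨⟨hcE, hcB⟩, hcb'⟩, Or.inr (Or.inr (Or.inl rfl))⟩
      · exact ⟨⟨⟨hdE, hdB⟩, hdb'⟩, Or.inr (Or.inr (Or.inr rfl))⟩
  have hbase_iff : (del M {b'}).IsBase (insert c (insert d (B \ {r, s}))) ↔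
      A r c * A s d - A r d * A s c ≠ 0 := by
    have hZne : ({r, s, c, d} : Set α).Nonempty := ⟨r, Or.inl rfl⟩
    rw [← symmDiff_pair hr hs hcB hdB,
      rep_base_iff rep hZsub hZne
        (by rw [hXZ, hYZ, Set.encard_pair hrs, Set.encard_pair hcd])]
    have hcY : c ∈ (M.E \ B) \ {b'} := ⟨⟨hcE, hcB⟩, hcb'⟩
    have hdY : d ∈ (M.E \ B) \ {b'} := ⟨⟨hdE, hdB⟩, hdb'⟩
    exact nonzero_pair_iff hr hs hrs hcY hdY hcd rep.1
  constructor
  · intro h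
    exact (del_indep_iff.mp (hbase_iff.mpr h).indep).1
  · intro h
    apply hbase_iff.mp
    apply base_of_indep_del hfin hQB h
    · rw [Set.insert_subset_iff, Set.insert_subset_iff]
      refine ⟨⟨hcE, hcb'⟩, ⟨hdE, hdb'⟩, ?_⟩
      intro t ht
      exact ⟨hBsub ht.1, fun hb => hb'B (by rw [← Set.mem_singleton_iff.mp hb]; exact ht.1)⟩
    · exact encard_double_exchange hr hs hrs hcB hdB hcd

end Statement9Matroid
section Statement9Core

open Matroid

variable {α : Type*} {P : PartialField}

private lemma refute_half {M : Matroid α} {a b x y z w : α} {B : Set α} {A : α → α → P.R}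
    (hfin : M.E.Finite)
    (hBiM : M.Indep B) (hBsub : B ⊆ M.E) (haB : a ∉ B) (hbB : b ∉ B)
    (haE : a ∈ M.E) (hbE : b ∈ M.E) (hab : a ≠ b)
    (hxB : x ∈ B) (hyB : y ∈ B) (hxy : x ≠ y)
    (hzB : z ∈ B) (hzx : z ≠ x) (hzy : z ≠ y)
    (hwE : w ∈ M.E) (hwa : w ≠ a) (hwb : w ≠ b) (hzw : z ≠ w)
    (pm1 : IsPMatrix P B ((M.E \ B) \ {b}) A)
    (rep1 : Represents P B ((M.E \ B) \ {b}) A (del M {b}))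
    (pm2 : IsPMatrix P B ((M.E \ B) \ {a}) A)
    (rep2 : Represents P B ((M.E \ B) \ {a}) A (del M {a}))
    (hcl : a ∈ M.closure {z, w})
    (hdisc : (w ∈ B ∧ w = x) ∨ (w ∉ B ∧ A x w ≠ 0)) :
    (A x a * A y b - A x b * A y a) ∈ P.carrier ∧
    (A x a * A y b - A x b * A y a = 0 → ¬ M.IsBase ((B \ {x, y}) ∪ {a, b})) ∧
    (A x a * A y b - A x b * A y a ≠ 0 → ¬ M.Dep ((B \ {x, y}) ∪ {a, b})) := by
  classical
  have ha1 : a ∈ (M.E \ B) \ {b} := ⟨⟨haE, haB⟩, by simpa using hab⟩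
  have hb2 : b ∈ (M.E \ B) \ {a} := ⟨⟨hbE, hbB⟩, by simpa using hab.symm⟩
  have haz : a ≠ z := fun h => haB (h ▸ hzB)
  set I : Set α := B \ {x, y} with hIdef
  have hIiM : M.Indep I := hBiM.subset Set.diff_subset
  have hIE : I ⊆ M.E := Set.diff_subset.trans hBsub
  have hzI : z ∈ I := ⟨hzB, by simp [hzx, hzy]⟩
  have hUeq : (B \ {x, y}) ∪ {a, b} = insert a (insert b I) := by
    rw [hIdef, Set.union_insert, Set.union_singleton]
  have hUE : (B \ {x, y}) ∪ {a, b} ⊆ M.E := by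
    rw [hUeq]
    exact Set.insert_subset haE (Set.insert_subset hbE hIE)
  have keyT : ∀ T : Set α, T ⊆ M.E → z ∈ T → w ∈ M.closure T → a ∈ M.closure T := by
    intro T hTE hzT hwT
    have hsub : ({z, w} : Set α) ⊆ M.closure T := by
      rintro t (rfl | rfl)
      · exact M.mem_closure_of_mem hzT hTE
      · exact hwT
    exact M.closure_subset_closure_of_subset_closure hsub hcl
  have dep_insert : ∀ J : Set α, M.Indep J → a ∉ J → a ∈ M.closure J → M.Dep (insert a J) := by
    intro J hJ haJ hacl
    rw [Matroid.dep_iff]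
    refine ⟨fun hind => ?_, Set.insert_subset haE hJ.subset_ground⟩
    exact ((hJ.insert_indep_iff_of_notMem haJ).mp hind).2 hacl
  have notBase_of_aclI : a ∈ M.closure I → ¬ M.IsBase ((B \ {x, y}) ∪ {a, b}) := by
    intro hacl hBase
    have haI : a ∉ I := fun h => haB h.1
    have hdep := dep_insert I hIiM haI hacl
    have hdepU : M.Dep ((B \ {x, y}) ∪ {a, b}) := by
      apply hdep.superset _ hUE
      rw [hUeq]
      intro t ht
      rcases ht with rfl | ht
      · exact Set.mem_insert _ _
      · exact Set.mem_insert_of_mem _ (Set.mem_insert_of_mem _ ht)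
    exact hdepU.not_indep hBase.indep
  rcases hdisc with ⟨hwB', hwx⟩ | ⟨hwB, hAxw⟩
  · -- the case `w = x`
    rw [hwx] at hcl keyT
    have hay0 : A y a = 0 := by
      rw [entry_zero_iff hfin rep1 hBiM hBsub hbB hyB ha1]
      apply keyT (B \ {y}) (Set.diff_subset.trans hBsub) ⟨hzB, by simp [hzy]⟩
      exact M.mem_closure_of_mem ⟨hxB, by simp [hxy]⟩ (Set.diff_subset.trans hBsub)
    have hacly : a ∈ M.closure (B \ {y}) := by
      rw [entry_zero_iff hfin rep1 hBiM hBsub hbB hyB ha1] at hay0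
      exact hay0
    have hD : A x a * A y b - A x b * A y a = A x a * A y b := by rw [hay0]; ring
    have hcar : A x a * A y b - A x b * A y a ∈ P.carrier := by
      rw [hD]; exact pf_mul_mem (entry_carrier pm1 hxB ha1) (entry_carrier pm2 hyB hb2)
    refine ⟨hcar, ?_, ?_⟩
    · intro hD0 hBase
      rw [hD] at hD0
      have hfac : A x a = 0 ∨ A y b = 0 := by
        by_cases h : A x a = 0
        · exact Or.inl h
        · exact Or.inr (pf_cancel (entry_carrier pm1 hxB ha1) h hD0)
      rcases hfac with hax0 | hyb0
      · have haclx : a ∈ M.closure (B \ {x}) :=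
          (entry_zero_iff hfin rep1 hBiM hBsub hbB hxB ha1).mp hax0
        by_cases hazcl : a ∈ M.closure {z}
        · exact notBase_of_aclI
            (M.closure_subset_closure (Set.singleton_subset_iff.mpr hzI) hazcl) hBase
        · have hcl' : a ∈ M.closure (insert x {z}) \ M.closure {z} := by
            refine ⟨?_, hazcl⟩
            rwa [show (insert x {z} : Set α) = {z, x} from Set.pair_comm x z]
          have hx_ex := Matroid.closure_exchange hcl'
          have hxcl : x ∈ M.closure (B \ {x}) := by
            have hsub2 : (insert a {z} : Set α) ⊆ M.closure (B \ {x}) := by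
              rintro t (rfl | rfl)
              · exact haclx
              · exact M.mem_closure_of_mem ⟨hzB, by simp [hzx]⟩ (Set.diff_subset.trans hBsub)
            exact M.closure_subset_closure_of_subset_closure hsub2 hx_ex.1
          exact hBiM.notMem_closure_diff_of_mem hxB hxcl
      · have hbcly : b ∈ M.closure (B \ {y}) :=
          (entry_zero_iff hfin rep2 hBiM hBsub haB hyB hb2).mp hyb0
        have hUcl : (B \ {x, y}) ∪ {a, b} ⊆ M.closure (B \ {y}) := by
          intro t ht
          rcases ht with htI | ht
          · exact M.mem_closure_of_mem ⟨htI.1, fun hh => htI.2 (Set.mem_insert_of_mem _ hh)⟩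
              (Set.diff_subset.trans hBsub)
          · rcases ht with rfl | rfl
            · exact hacly
            · exact hbcly
        have h1 : M.E ⊆ M.closure (B \ {y}) := by
          rw [← hBase.closure_eq]
          exact M.closure_subset_closure_of_subset_closure hUcl
        exact hBiM.notMem_closure_diff_of_mem hyB (h1 (hBsub hyB))
    · intro hDne hDep
      rw [hD] at hDne
      have haxne : A x a ≠ 0 := fun h => hDne (by rw [h, zero_mul])
      have haybne : A y b ≠ 0 := fun h => hDne (by rw [h, mul_zero])
      have hind : M.Indep (insert a (B \ {x})) :=
        (entry_iff_indep hfin rep1 hBiM hBsub hbB hxB ha1).mp haxne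
      have hJ : M.Indep (insert a I) := by
        apply hind.subset
        apply Set.insert_subset_insert
        exact Set.diff_subset_diff_right
          (Set.singleton_subset_iff.mpr (Set.mem_insert _ _))
      have hIy : M.Indep (B \ {y}) := hBiM.subset Set.diff_subset
      have hbny : b ∉ M.closure (B \ {y}) := by
        have h2 : M.Indep (insert b (B \ {y})) :=
          (entry_iff_indep hfin rep2 hBiM hBsub haB hyB hb2).mp haybne
        exact ((hIy.insert_indep_iff_of_notMem (fun hh => hbB hh.1)).mp h2).2
      have hJcl : insert a I ⊆ M.closure (B \ {y}) := by
        intro t ht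
        rcases ht with rfl | ht
        · exact hacly
        · exact M.mem_closure_of_mem ⟨ht.1, fun hh => ht.2 (Set.mem_insert_of_mem _ hh)⟩
            (Set.diff_subset.trans hBsub)
      have hbJ : b ∉ M.closure (insert a I) :=
        fun h => hbny (M.closure_subset_closure_of_subset_closure hJcl h)
      have hbaI : b ∉ insert a I := by
        intro hh; rcases hh with h | h
        · exact hab h.symm
        · exact hbB h.1
      have hUind : M.Indep (insert b (insert a I)) :=
        (hJ.insert_indep_iff_of_notMem hbaI).mpr ⟨hbE, hbJ⟩
      apply hDep.not_indep
      rw [hUeq, Set.insert_comm]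
      exact hUind
  · -- the case `w ∉ B`, `A x w ≠ 0`
    have hw1 : w ∈ (M.E \ B) \ {b} := ⟨⟨hwE, hwB⟩, by simpa using hwb⟩
    have hw2 : w ∈ (M.E \ B) \ {a} := ⟨⟨hwE, hwB⟩, by simpa using hwa⟩
    have hdep_zwa : M.Dep (insert a {z, w}) := by
      have hzwE : ({z, w} : Set α) ⊆ M.E := by
        rintro t (rfl | rfl)
        · exact hBsub hzB
        · exact hwE
      by_cases hzw_ind : M.Indep {z, w}
      · apply dep_insert _ hzw_ind _ hcl
        intro hh; rcases hh with h | h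
        · exact haz h
        · exact hwa h.symm
      · exact (Matroid.dep_of_not_indep hzw_ind hzwE).superset (Set.subset_insert _ _)
          (Set.insert_subset haE hzwE)
    have hdep_big : ¬ M.Indep (insert w (insert a I)) := by
      intro hind
      apply hdep_zwa.not_indep
      apply hind.subset
      rintro t (rfl | rfl | rfl)
      · exact Set.mem_insert_of_mem _ (Set.mem_insert _ _)
      · exact Set.mem_insert_of_mem _ (Set.mem_insert_of_mem _ hzI)
      · exact Set.mem_insert _ _
    have hF1 : A x w * A y a - A x a * A y w = 0 := by
      by_contra hne
      exact hdep_big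
        ((det2_iff_indep hfin rep1 hBiM hBsub hbB hxB hyB hxy hw1 ha1 hwa).mp hne)
    have hF1' : A x w * A y a = A x a * A y w := sub_eq_zero.mp hF1
    have hident : (A x a * A y b - A x b * A y a) * A x w =
        A x a * (A x w * A y b - A x b * A y w) := by
      linear_combination (-(A x b)) * hF1'
    have hxwcar : A x w ∈ P.carrier := entry_carrier pm1 hxB hw1
    obtain ⟨v, hv1, hvcar⟩ := pf_inv_mem hxwcar hAxw
    have hDeq : A x a * A y b - A x b * A y a =
        (v : P.R) * (A x a * (A x w * A y b - A x b * A y w)) := by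
      have hstep : (v : P.R) * ((A x a * A y b - A x b * A y a) * A x w) =
          A x a * A y b - A x b * A y a := by
        rw [show (v : P.R) * ((A x a * A y b - A x b * A y a) * A x w) =
            (A x a * A y b - A x b * A y a) * ((v : P.R) * A x w) from by ring, hv1, mul_one]
      rw [← hstep, hident]
    have hd2car : A x w * A y b - A x b * A y w ∈ P.carrier :=
      det2_carrier pm2 hxB hyB hxy hw2 hb2 hwb
    have haacar : A x a ∈ P.carrier := entry_carrier pm1 hxB ha1
    have hcar : A x a * A y b - A x b * A y a ∈ P.carrier := by
      rw [hDeq]; exact pf_mul_mem hvcar (pf_mul_mem haacar hd2car)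
    refine ⟨hcar, ?_, ?_⟩
    · intro hD0 hBase
      have hprod : A x a * (A x w * A y b - A x b * A y w) = 0 := by
        have h3 := hident
        rw [hD0, zero_mul] at h3
        exact h3.symm
      have hfac : A x a = 0 ∨ A x w * A y b - A x b * A y w = 0 := by
        by_cases h : A x a = 0
        · exact Or.inl h
        · exact Or.inr (pf_cancel haacar h hprod)
      rcases hfac with hax0 | hd20
      · have haclx : a ∈ M.closure (B \ {x}) :=
          (entry_zero_iff hfin rep1 hBiM hBsub hbB hxB ha1).mp hax0
        by_cases hazcl : a ∈ M.closure {z}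
        · exact notBase_of_aclI
            (M.closure_subset_closure (Set.singleton_subset_iff.mpr hzI) hazcl) hBase
        · have hcl' : a ∈ M.closure (insert w {z}) \ M.closure {z} := by
            refine ⟨?_, hazcl⟩
            rwa [show (insert w {z} : Set α) = {z, w} from Set.pair_comm w z]
          have hw_ex := Matroid.closure_exchange hcl'
          have hwclx : w ∈ M.closure (B \ {x}) := by
            have hsub2 : (insert a {z} : Set α) ⊆ M.closure (B \ {x}) := by
              rintro t (rfl | rfl)
              · exact haclx
              · exact M.mem_closure_of_mem ⟨hzB, by simp [hzx]⟩ (Set.diff_subset.trans hBsub)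
            exact M.closure_subset_closure_of_subset_closure hsub2 hw_ex.1
          exact hAxw ((entry_zero_iff hfin rep1 hBiM hBsub hbB hxB hw1).mpr hwclx)
      · have hB3dep : ¬ M.Indep (insert w (insert b I)) := by
          intro hind
          exact (det2_iff_indep hfin rep2 hBiM hBsub haB hxB hyB hxy hw2 hb2 hwb).mpr
            hind hd20
        have hdepU : M.Dep ((B \ {x, y}) ∪ {a, b}) := by
          rw [hUeq]
          by_cases hIb : M.Indep (insert b I)
          · have hwbI : w ∉ insert b I := by
              intro hh; rcases hh with h | h
              · exact hwb h
              · exact hwB h.1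
            have hwcl : w ∈ M.closure (insert b I) := by
              by_contra hno
              exact hB3dep ((hIb.insert_indep_iff_of_notMem hwbI).mpr ⟨hwE, hno⟩)
            have hbIE : insert b I ⊆ M.E := Set.insert_subset hbE hIE
            have hacl : a ∈ M.closure (insert b I) :=
              keyT _ hbIE (Set.mem_insert_of_mem _ hzI) hwcl
            have habI : a ∉ insert b I := by
              intro hh; rcases hh with h | h
              · exact hab h
              · exact haB h.1
            exact dep_insert _ hIb habI hacl
          · exact (Matroid.dep_of_not_indep hIb (Set.insert_subset hbE hIE)).superset
              (Set.subset_insert _ _) (by rw [← hUeq]; exact hUE)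
        exact hdepU.not_indep hBase.indep
    · intro hDne hDep
      have haxane : A x a ≠ 0 := by
        intro h; apply hDne; rw [hDeq, h, zero_mul, mul_zero]
      have hd2ne : A x w * A y b - A x b * A y w ≠ 0 := by
        intro h; apply hDne; rw [hDeq, h, mul_zero, mul_zero]
      have hB3ind : M.Indep (insert w (insert b I)) :=
        (det2_iff_indep hfin rep2 hBiM hBsub haB hxB hyB hxy hw2 hb2 hwb).mp hd2ne
      have hIb : M.Indep (insert b I) := hB3ind.subset (Set.subset_insert _ _)
      have hwbI : w ∉ insert b I := by
        intro hh; rcases hh with h | h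
        · exact hwb h
        · exact hwB h.1
      have hwncl : w ∉ M.closure (insert b I) := by
        have h2 := hB3ind.notMem_closure_diff_of_mem (Set.mem_insert _ _)
        rwa [Set.insert_diff_self_of_notMem hwbI] at h2
      have hancl : a ∉ M.closure (insert b I) := by
        intro hacl
        by_cases hazcl : a ∈ M.closure {z}
        · have h4 : a ∈ M.closure (B \ {x}) :=
            M.closure_subset_closure
            (show ({z} : Set α) ⊆ B \ {x} from
              Set.singleton_subset_iff.mpr ⟨hzB, by simp [hzx]⟩) hazcl
          exact haxane ((entry_zero_iff hfin rep1 hBiM hBsub hbB hxB ha1).mpr h4)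
        · have hcl' : a ∈ M.closure (insert w {z}) \ M.closure {z} := by
            refine ⟨?_, hazcl⟩
            rwa [show (insert w {z} : Set α) = {z, w} from Set.pair_comm w z]
          have hw_ex := Matroid.closure_exchange hcl'
          apply hwncl
          have hsub2 : (insert a {z} : Set α) ⊆ M.closure (insert b I) := by
            rintro t (rfl | rfl)
            · exact hacl
            · exact M.mem_closure_of_mem (Set.mem_insert_of_mem _ hzI)
                (Set.insert_subset hbE hIE)
          exact M.closure_subset_closure_of_subset_closure hsub2 hw_ex.1
      have habI : a ∉ insert b I := by
        intro hh; rcases hh with h | h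
        · exact hab h
        · exact haB h.1
      have hUind : M.Indep (insert a (insert b I)) :=
        (hIb.insert_indep_iff_of_notMem habI).mpr ⟨haE, hancl⟩
      apply hDep.not_indep
      rw [hUeq]
      exact hUind

end Statement9Core
section Statement9Assemble

open Matroid

variable {α : Type*} {P : PartialField}

private lemma triple_swap {M : Matroid α} {a b x y : α} {B : Set α} {A : α → α → P.R}
    (h : (A y a * A x b - A y b * A x a) ∈ P.carrier ∧
      (A y a * A x b - A y b * A x a = 0 → ¬ M.IsBase ((B \ {y, x}) ∪ {a, b})) ∧
      (A y a * A x b - A y b * A x a ≠ 0 → ¬ M.Dep ((B \ {y, x}) ∪ {a, b}))) :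
    (A x a * A y b - A x b * A y a) ∈ P.carrier ∧
    (A x a * A y b - A x b * A y a = 0 → ¬ M.IsBase ((B \ {x, y}) ∪ {a, b})) ∧
    (A x a * A y b - A x b * A y a ≠ 0 → ¬ M.Dep ((B \ {x, y}) ∪ {a, b})) := by
  obtain ⟨h1, h2, h3⟩ := h
  have hrel : A x a * A y b - A x b * A y a = -(A y a * A x b - A y b * A x a) := by ring
  have hset : (B \ ({y, x} : Set α)) ∪ {a, b} = (B \ {x, y}) ∪ {a, b} := by
    rw [Set.pair_comm y x]
  refine ⟨by rw [hrel]; exact pf_neg_mem h1, ?_, ?_⟩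
  · intro h0
    rw [hrel, neg_eq_zero] at h0
    rw [← hset]
    exact h2 h0
  · intro hne
    rw [hrel, neg_ne_zero] at hne
    rw [← hset]
    exact h3 hne

private lemma refute_core {M : Matroid α} {a b x y z w : α} {B : Set α} {A : α → α → P.R}
    (hfin : M.E.Finite)
    (hBiM : M.Indep B) (hBsub : B ⊆ M.E) (haB : a ∉ B) (hbB : b ∉ B)
    (haE : a ∈ M.E) (hbE : b ∈ M.E) (hab : a ≠ b)
    (hxB : x ∈ B) (hyB : y ∈ B) (hxy : x ≠ y)
    (hzB : z ∈ B) (hzx : z ≠ x) (hzy : z ≠ y)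
    (hwE : w ∈ M.E) (hwa : w ≠ a) (hwb : w ≠ b) (hzw : z ≠ w)
    (pm1 : IsPMatrix P B ((M.E \ B) \ {b}) A)
    (rep1 : Represents P B ((M.E \ B) \ {b}) A (del M {b}))
    (pm2 : IsPMatrix P B ((M.E \ B) \ {a}) A)
    (rep2 : Represents P B ((M.E \ B) \ {a}) A (del M {a}))
    (hcl : a ∈ M.closure {z, w}) :
    (A x a * A y b - A x b * A y a) ∈ P.carrier ∧
    (A x a * A y b - A x b * A y a = 0 → ¬ M.IsBase ((B \ {x, y}) ∪ {a, b})) ∧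
    (A x a * A y b - A x b * A y a ≠ 0 → ¬ M.Dep ((B \ {x, y}) ∪ {a, b})) := by
  classical
  have ha1 : a ∈ (M.E \ B) \ {b} := ⟨⟨haE, haB⟩, by simpa using hab⟩
  set I : Set α := B \ {x, y} with hIdef
  have hIiM : M.Indep I := hBiM.subset Set.diff_subset
  have hIE : I ⊆ M.E := Set.diff_subset.trans hBsub
  have hzI : z ∈ I := ⟨hzB, by simp [hzx, hzy]⟩
  have hUeq : (B \ {x, y}) ∪ {a, b} = insert a (insert b I) := by
    rw [hIdef, Set.union_insert, Set.union_singleton]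
  have hUE : (B \ {x, y}) ∪ {a, b} ⊆ M.E := by
    rw [hUeq]
    exact Set.insert_subset haE (Set.insert_subset hbE hIE)
  have keyT : ∀ T : Set α, T ⊆ M.E → z ∈ T → w ∈ M.closure T → a ∈ M.closure T := by
    intro T hTE hzT hwT
    have hsub : ({z, w} : Set α) ⊆ M.closure T := by
      rintro t (rfl | rfl)
      · exact M.mem_closure_of_mem hzT hTE
      · exact hwT
    exact M.closure_subset_closure_of_subset_closure hsub hcl
  have notBase_of_aclI : a ∈ M.closure I → ¬ M.IsBase ((B \ {x, y}) ∪ {a, b}) := by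
    intro hacl hBase
    have haI : a ∉ I := fun h => haB h.1
    have hdep : M.Dep (insert a I) := by
      rw [Matroid.dep_iff]
      refine ⟨fun hind => ?_, Set.insert_subset haE hIE⟩
      exact ((hIiM.insert_indep_iff_of_notMem haI).mp hind).2 hacl
    have hdepU : M.Dep ((B \ {x, y}) ∪ {a, b}) := by
      apply hdep.superset _ hUE
      rw [hUeq]
      intro t ht
      rcases ht with rfl | ht
      · exact Set.mem_insert _ _
      · exact Set.mem_insert_of_mem _ (Set.mem_insert_of_mem _ ht)
    exact hdepU.not_indep hBase.indep
  by_cases hwB : w ∈ B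
  · by_cases hwx : w = x
    · exact refute_half hfin hBiM hBsub haB hbB haE hbE hab hxB hyB hxy hzB hzx hzy
        hwE hwa hwb hzw pm1 rep1 pm2 rep2 hcl (Or.inl ⟨hwB, hwx⟩)
    · by_cases hwy : w = y
      · exact triple_swap (refute_half hfin hBiM hBsub haB hbB haE hbE hab hyB hxB hxy.symm
          hzB hzy hzx hwE hwa hwb hzw pm1 rep1 pm2 rep2 hcl (Or.inl ⟨hwB, hwy⟩))
      · -- `w ∈ B \ {x, y}`
        have hwI : w ∈ I := ⟨hwB, by simp [hwx, hwy]⟩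
        have hax0 : A x a = 0 := by
          rw [entry_zero_iff hfin rep1 hBiM hBsub hbB hxB ha1]
          apply keyT (B \ {x}) (Set.diff_subset.trans hBsub) ⟨hzB, by simp [hzx]⟩
          exact M.mem_closure_of_mem ⟨hwB, by simp [hwx]⟩ (Set.diff_subset.trans hBsub)
        have hay0 : A y a = 0 := by
          rw [entry_zero_iff hfin rep1 hBiM hBsub hbB hyB ha1]
          apply keyT (B \ {y}) (Set.diff_subset.trans hBsub) ⟨hzB, by simp [hzy]⟩
          exact M.mem_closure_of_mem ⟨hwB, by simp [hwy]⟩ (Set.diff_subset.trans hBsub)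
        have hD0 : A x a * A y b - A x b * A y a = 0 := by rw [hax0, hay0]; ring
        refine ⟨by rw [hD0]; exact pf_zero_mem P, ?_, ?_⟩
        · intro _ hBase
          exact notBase_of_aclI (keyT I hIE hzI (M.mem_closure_of_mem hwI hIE)) hBase
        · intro hne
          exact absurd hD0 hne
  · have hw1 : w ∈ (M.E \ B) \ {b} := ⟨⟨hwE, hwB⟩, by simpa using hwb⟩
    by_cases hAxw : A x w = 0
    · by_cases hAyw : A y w = 0
      · -- `w ∉ B` and both entries vanish
        have hwclx : w ∈ M.closure (B \ {x}) :=
          (entry_zero_iff hfin rep1 hBiM hBsub hbB hxB hw1).mp hAxw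
        have hwcly : w ∈ M.closure (B \ {y}) :=
          (entry_zero_iff hfin rep1 hBiM hBsub hbB hyB hw1).mp hAyw
        have hax0 : A x a = 0 := by
          rw [entry_zero_iff hfin rep1 hBiM hBsub hbB hxB ha1]
          exact keyT (B \ {x}) (Set.diff_subset.trans hBsub) ⟨hzB, by simp [hzx]⟩ hwclx
        have hay0 : A y a = 0 := by
          rw [entry_zero_iff hfin rep1 hBiM hBsub hbB hyB ha1]
          exact keyT (B \ {y}) (Set.diff_subset.trans hBsub) ⟨hzB, by simp [hzy]⟩ hwcly
        have hD0 : A x a * A y b - A x b * A y a = 0 := by rw [hax0, hay0]; ring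
        refine ⟨by rw [hD0]; exact pf_zero_mem P, ?_, ?_⟩
        · intro _ hBase
          apply notBase_of_aclI ?_ hBase
          by_cases hwclI : w ∈ M.closure I
          · exact keyT I hIE hzI hwclI
          · exfalso
            have hBx_eq : B \ ({x} : Set α) = insert y I := by
              ext t
              simp only [Set.mem_diff, Set.mem_singleton_iff, Set.mem_insert_iff]
              constructor
              · rintro ⟨htB, htx⟩
                by_cases hty : t = y
                · exact Or.inl hty
                · exact Or.inr ⟨htB, by simp [htx, hty]⟩
              · rintro (rfl | ⟨htB, ht⟩)
                · exact ⟨hyB, hxy.symm⟩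
                · simp only [Set.mem_insert_iff, Set.mem_singleton_iff] at ht
                  push_neg at ht
                  exact ⟨htB, ht.1⟩
            have hBy_eq : B \ ({y} : Set α) = insert x I := by
              ext t
              simp only [Set.mem_diff, Set.mem_singleton_iff, Set.mem_insert_iff]
              constructor
              · rintro ⟨htB, hty⟩
                by_cases htx : t = x
                · exact Or.inl htx
                · exact Or.inr ⟨htB, by simp [htx, hty]⟩
              · rintro (rfl | ⟨htB, ht⟩)
                · exact ⟨hxB, hxy⟩
                · simp only [Set.mem_insert_iff, Set.mem_singleton_iff] at ht
                  push_neg at ht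
                  exact ⟨htB, ht.2⟩
            have h1 : w ∈ M.closure (insert y I) \ M.closure I :=
              ⟨by rwa [hBx_eq] at hwclx, hwclI⟩
            have h2 : w ∈ M.closure (insert x I) \ M.closure I :=
              ⟨by rwa [hBy_eq] at hwcly, hwclI⟩
            have h3 := Matroid.closure_exchange h2
            have hsub : (insert w I : Set α) ⊆ M.closure (insert y I) := by
              rintro t (rfl | ht)
              · exact h1.1
              · exact M.mem_closure_of_mem (Set.mem_insert_of_mem _ ht)
                  (Set.insert_subset (hBsub hyB) hIE)
            have hx4 : x ∈ M.closure (B \ {x}) := by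
              rw [hBx_eq]
              exact M.closure_subset_closure_of_subset_closure hsub h3.1
            exact hBiM.notMem_closure_diff_of_mem hxB hx4
        · intro hne
          exact absurd hD0 hne
      · exact triple_swap (refute_half hfin hBiM hBsub haB hbB haE hbE hab hyB hxB hxy.symm
          hzB hzy hzx hwE hwa hwb hzw pm1 rep1 pm2 rep2 hcl (Or.inr ⟨hwB, hAyw⟩))
    · exact refute_half hfin hBiM hBsub haB hbB haE hbE hab hxB hyB hxy hzB hzx hzy
        hwE hwa hwb hzw pm1 rep1 pm2 rep2 hcl (Or.inr ⟨hwB, hAxw⟩)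

end Statement9Assemble
/-- Lemma 3.6, `unstablemeetsxy`. -/
theorem statement_9 (P : PartialField) (M N : Matroid α) (a b x y : α) (B : Set α)
    (A : α → α → P.R) (st : Setup P M N a b x y B A)
    (u : α) (hu : Strong N (del M {a, b}) B u) (huxy : u ∉ ({x, y} : Set α))
    (S : Set α) (hS : UnstableSeriesPair M a b u S) :
    S ∩ B ⊆ {x, y} := by
  obtain ⟨hSer, hS2, hclS⟩ := hS
  have hfin : M.E.Finite := st.mFin.ground_finite
  have hBdel := st.hB
  have hBsub2 : B ⊆ M.E \ {a, b} := by
    have h1 := hBdel.subset_ground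
    rwa [del, Matroid.restrict_ground_eq] at h1
  have hBiM : M.Indep B := by
    have h1 := hBdel.indep
    rw [del, Matroid.restrict_indep_iff] at h1
    exact h1.1
  have hBsub : B ⊆ M.E := fun t ht => (hBsub2 ht).1
  have haB : a ∉ B := fun h => (hBsub2 h).2 (Set.mem_insert _ _)
  have hbB : b ∉ B := fun h => (hBsub2 h).2 (Set.mem_insert_of_mem _ rfl)
  have hab := st.hab
  have haE := st.haE
  have hbE := st.hbE
  have hxB := st.hx
  have hyB := st.hy
  have hxy := st.hxy
  have hSsub : S ⊆ M.E \ {a, b, u} := by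
    obtain ⟨e0, he0i, hSdef⟩ := hSer
    intro f hf
    rw [hSdef] at hf
    have h1 : (del M {a, b, u})✶.Indep {f} := hf.2.1
    have h3 : f ∈ (del M {a, b, u})✶.E := h1.subset_ground rfl
    rwa [Matroid.dual_ground, del, Matroid.restrict_ground_eq] at h3
  intro t ht
  by_contra htxy
  obtain ⟨htS, htB⟩ := ht
  have hzx : t ≠ x := fun h => htxy (Or.inl h)
  have hzy : t ≠ y := fun h => htxy (Or.inr h)
  obtain ⟨c, d, hcd, hScd⟩ := Set.encard_eq_two.mp hS2
  have htcd : t = c ∨ t = d := by rw [hScd] at htS; exact htS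
  obtain ⟨w, hwS, hzw, hSzw⟩ : ∃ w, w ∈ S ∧ t ≠ w ∧ S = {t, w} := by
    rcases htcd with rfl | rfl
    · exact ⟨d, by rw [hScd]; exact Or.inr rfl, hcd, hScd⟩
    · refine ⟨c, by rw [hScd]; exact Or.inl rfl, hcd.symm, ?_⟩
      rw [hScd, Set.pair_comm]
  have hwE : w ∈ M.E := (hSsub hwS).1
  have hwa : w ≠ a := fun h => (hSsub hwS).2 (Or.inl h)
  have hwb : w ≠ b := fun h => (hSsub hwS).2 (Or.inr (Or.inl h))
  rw [hSzw] at hclS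
  obtain ⟨hZE, Xz, Yz, e, hXz, hYz, hdisj⟩ := st.hInc
  have hBZ : B ∩ {a, b, x, y} = {x, y} := by
    ext s
    simp only [Set.mem_inter_iff, Set.mem_insert_iff, Set.mem_singleton_iff]
    constructor
    · rintro ⟨hsB, rfl | rfl | rfl | rfl⟩
      · exact absurd hsB haB
      · exact absurd hsB hbB
      · exact Or.inl rfl
      · exact Or.inr rfl
    · rintro (rfl | rfl)
      · exact ⟨hxB, Or.inr (Or.inr (Or.inl rfl))⟩
      · exact ⟨hyB, Or.inr (Or.inr (Or.inr rfl))⟩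
  have hYZc : (M.E \ B) ∩ {a, b, x, y} = {a, b} := by
    ext s
    simp only [Set.mem_inter_iff, Set.mem_diff, Set.mem_insert_iff, Set.mem_singleton_iff]
    constructor
    · rintro ⟨⟨hsE, hsB⟩, rfl | rfl | rfl | rfl⟩
      · exact Or.inl rfl
      · exact Or.inr rfl
      · exact absurd hxB hsB
      · exact absurd hyB hsB
    · rintro (rfl | rfl)
      · exact ⟨⟨haE, haB⟩, Or.inl rfl⟩
      · exact ⟨⟨hbE, hbB⟩, Or.inr (Or.inl rfl)⟩
  rw [hBZ] at hXz
  rw [hYZc] at hYz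
  have hUsymm : symmDiff B {a, b, x, y} = (B \ {x, y}) ∪ {a, b} := by
    rw [Set.symmDiff_def]
    ext s
    simp only [Set.mem_union, Set.mem_diff, Set.mem_insert_iff, Set.mem_singleton_iff]
    constructor
    · rintro (⟨hsB, hno⟩ | ⟨rfl | rfl | rfl | rfl, hsB⟩)
      · push_neg at hno
        exact Or.inl ⟨hsB, by push_neg; exact ⟨hno.2.2.1, hno.2.2.2⟩⟩
      · exact Or.inr (Or.inl rfl)
      · exact Or.inr (Or.inr rfl)
      · exact absurd hxB hsB
      · exact absurd hyB hsB
    · rintro (⟨hsB, hno⟩ | rfl | rfl)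
      · push_neg at hno
        refine Or.inl ⟨hsB, ?_⟩
        push_neg
        exact ⟨fun h => haB (h ▸ hsB), fun h => hbB (h ▸ hsB), hno.1, hno.2⟩
      · exact Or.inr ⟨Or.inl rfl, haB⟩
      · exact Or.inr ⟨Or.inr (Or.inl rfl), hbB⟩
  have htriple : (A x a * A y b - A x b * A y a) ∈ P.carrier ∧
      (A x a * A y b - A x b * A y a = 0 → ¬ M.IsBase ((B \ {x, y}) ∪ {a, b})) ∧
      (A x a * A y b - A x b * A y a ≠ 0 → ¬ M.Dep ((B \ {x, y}) ∪ {a, b})) := by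
    rcases hclS with hcla | hclb
    · exact refute_core hfin hBiM hBsub haB hbB haE hbE hab hxB hyB hxy htB hzx hzy
        hwE hwa hwb hzw st.hComp.pMatb st.hComp.repb st.hComp.pMata st.hComp.repa hcla
    · have h := refute_core (a := b) (b := a) hfin hBiM hBsub hbB haB hbE haE hab.symm
        hxB hyB hxy htB hzx hzy hwE hwb hwa hzw st.hComp.pMata st.hComp.repa
        st.hComp.pMatb st.hComp.repb hclb
      obtain ⟨h1, h2, h3⟩ := h
      have hrel : A x a * A y b - A x b * A y a = -(A x b * A y a - A x a * A y b) := by ring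
      have hset : (B \ ({x, y} : Set α)) ∪ {b, a} = (B \ {x, y}) ∪ {a, b} := by
        rw [Set.pair_comm b a]
      refine ⟨by rw [hrel]; exact pf_neg_mem h1, ?_, ?_⟩
      · intro h0
        rw [hrel, neg_eq_zero] at h0
        rw [← hset]
        exact h2 h0
      · intro hne
        rw [hrel, neg_ne_zero] at hne
        rw [← hset]
        exact h3 hne
  obtain ⟨hcar, hbase, hdepU⟩ := htriple
  rcases subdet_pair hxy hab hXz hYz e with hsd | hsd
  · rcases hdisj with h1 | h2 | h3
    · exact h1 (by rw [hsd]; exact hcar)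
    · obtain ⟨h0, hBs⟩ := h2
      rw [hsd] at h0
      exact hbase h0 (by rwa [hUsymm] at hBs)
    · obtain ⟨hne, hDp⟩ := h3
      rw [hsd] at hne
      exact hdepU hne (by rwa [hUsymm] at hDp)
  · have hsd' : subdet P A Xz Yz e = -(A x a * A y b - A x b * A y a) := by rw [hsd]; ring
    rcases hdisj with h1 | h2 | h3
    · exact h1 (by rw [hsd']; exact pf_neg_mem hcar)
    · obtain ⟨h0, hBs⟩ := h2
      rw [hsd', neg_eq_zero] at h0
      exact hbase h0 (by rwa [hUsymm] at hBs)
    · obtain ⟨hne, hDp⟩ := h3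
      rw [hsd', neg_ne_zero] at hne
      exact hdepU hne (by rwa [hUsymm] at hDp)

end ExcludedMinorsFragile
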